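/- Let f : ℝ → ℝ be real-analytic and 1-periodic, and assume f is not identically zero. Then the function t ↦ log|f(t)| is Lebesgue-integrable on [0,1], i.e. ∫₀¹ |log|f(t)|| dt < ∞. -/

import Mathlib

open MeasureTheory

lemma myIntervalIntegrable_log01 : IntervalIntegrable Real.log volume 0 1 := by
  rw [intervalIntegrable_iff_integrableOn_Ioc_of_le zero_le_one]
  have hg : IntegrableOn (fun x : ℝ => 2 * x ^ (-(1/2) : ℝ)) (Set.Ioc (0:ℝ) 1) volume := by
    have := (intervalIntegral.intervalIntegrable_rpow' (a := 0) (b := 1)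
      (r := -(1/2)) (by norm_num)).const_mul 2
    rwa [intervalIntegrable_iff_integrableOn_Ioc_of_le zero_le_one] at this
  refine hg.mono' Real.measurable_log.aestronglyMeasurable.restrict ?_
  rw [ae_restrict_iff' measurableSet_Ioc]
  refine Filter.Eventually.of_forall fun x hx => ?_
  have hx0 : 0 < x := hx.1
  have hlog : Real.log x ≤ 0 := Real.log_nonpos hx0.le hx.2
  have : -Real.log x ≤ 2 * x ^ (-(1/2) : ℝ) := by
    rw [← Real.log_inv]
    calc Real.log x⁻¹ ≤ (x⁻¹) ^ (1/2 : ℝ) / (1/2) :=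
          Real.log_le_rpow_div (inv_nonneg.mpr hx0.le) (by norm_num)
      _ = 2 * x ^ (-(1/2) : ℝ) := by
          rw [Real.inv_rpow hx0.le, ← Real.rpow_neg hx0.le]
          ring
  have habs : ‖Real.log x‖ = -Real.log x := by
    rw [Real.norm_eq_abs, abs_of_nonpos hlog]
  rw [habs]
  exact this

lemma myIntervalIntegrable_logabs (c : ℝ) :
    IntervalIntegrable (fun x => Real.log |x - c|) volume (-1 + c) (1 + c) := by
  have hB : IntervalIntegrable (fun x => Real.log |x|) volume 0 1 := by
    refine myIntervalIntegrable_log01.congr_ae ?_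
    filter_upwards [ae_restrict_mem measurableSet_uIoc] with x hx
    rw [Set.uIoc_of_le zero_le_one] at hx
    rw [abs_of_pos hx.1]
  have hC : IntervalIntegrable (fun x => Real.log |x|) volume (-1) 0 := by
    have := ((IntervalIntegrable.iff_comp_neg).mp hB).symm
    simpa using this
  have hD : IntervalIntegrable (fun x => Real.log |x|) volume (-1) 1 := hC.trans hB
  simpa using hD.comp_sub_right c

/-- If `f : ℝ → ℝ` is real-analytic, 1-periodic and not identically zero, then
`t ↦ log|f(t)|` is Lebesgue-integrable on `[0,1]`. -/
theorem log_abs_analytic_integrable (f : ℝ → ℝ) (hf : ∀ t, AnalyticAt ℝ f t)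
    (hper : ∀ t, f (t + 1) = f t) (hne : ∃ t, f t ≠ 0) :
    IntegrableOn (fun t => abs (Real.log (abs (f t)))) (Set.Icc (0:ℝ) 1) volume := by
  obtain ⟨t₁, ht₁⟩ := hne
  have hfc : Continuous f := continuous_iff_continuousAt.mpr fun t => (hf t).continuousAt
  have hFmeas : Measurable (fun t => |Real.log (|f t|)|) :=
    (Real.measurable_log.comp (continuous_abs.comp hfc).measurable).abs
  have key : LocallyIntegrable (fun t => |Real.log (|f t|)|) volume := by
    intro t₀
    have hfa := hf t₀
    have hord : analyticOrderAt f t₀ ≠ ⊤ := by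
      intro h
      rw [analyticOrderAt_eq_top] at h
      have hOn : AnalyticOnNhd ℝ f Set.univ := fun t _ => hf t
      have := hOn.eqOn_zero_of_preconnected_of_eventuallyEq_zero isPreconnected_univ
        (Set.mem_univ t₀) h
      exact ht₁ (this (Set.mem_univ t₁))
    obtain ⟨n, hn⟩ := WithTop.ne_top_iff_exists.mp hord
    obtain ⟨g, hg_an, hg_ne, hg_eq⟩ := (hfa.analyticOrderAt_eq_natCast (n := n)).mp hn.symm
    set C : ℝ := abs (Real.log (abs (g t₀))) + 1 with hC
    have hCnn : 0 ≤ C := by positivity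
    have hgC : ∀ᶠ z in nhds t₀, abs (Real.log (abs (g z))) ≤ C := by
      have h2 : ContinuousAt (fun z => abs (Real.log (abs (g z)))) t₀ := by
        have hg0 : |g t₀| ≠ 0 := by simpa using hg_ne
        exact (hg_an.continuousAt.abs.log hg0).abs
      have := h2.tendsto.eventually_lt_const (by simp [hC] : abs (Real.log (abs (g t₀))) < C)
      filter_upwards [this] with z hz using hz.le
    have hgne : ∀ᶠ z in nhds t₀, g z ≠ 0 := hg_an.continuousAt.eventually_ne hg_ne
    have hev : ∀ᶠ z in nhds t₀,
        z ≠ t₀ → abs (Real.log (abs (f z))) ≤ (n : ℝ) * abs (Real.log (abs (z - t₀))) + C := by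
      filter_upwards [hg_eq, hgne, hgC] with z h1 h2 h3 hz
      have hz' : z - t₀ ≠ 0 := sub_ne_zero.mpr hz
      have habs : |f z| = |z - t₀| ^ n * |g z| := by
        rw [h1, smul_eq_mul, abs_mul, abs_pow]
      rw [habs, Real.log_mul (pow_ne_zero n (abs_ne_zero.mpr hz')) (abs_ne_zero.mpr h2),
        Real.log_pow]
      calc abs ((n : ℝ) * Real.log (abs (z - t₀)) + Real.log (abs (g z)))
          ≤ abs ((n : ℝ) * Real.log (abs (z - t₀))) + abs (Real.log (abs (g z))) := abs_add_le _ _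
        _ ≤ (n : ℝ) * abs (Real.log (abs (z - t₀))) + C := by
            rw [abs_mul, abs_of_nonneg (by positivity : (0:ℝ) ≤ (n:ℝ))]
            exact add_le_add le_rfl h3
    obtain ⟨ε, hε, hball⟩ := Metric.eventually_nhds_iff.mp hev
    set δ : ℝ := min ε 1 with hδ
    have hδ0 : 0 < δ := lt_min hε one_pos
    refine ⟨Metric.ball t₀ δ, Metric.ball_mem_nhds t₀ hδ0, ?_⟩
    have hG : IntegrableOn (fun z => (n:ℝ) * abs (Real.log (abs (z - t₀))) + C)
        (Metric.ball t₀ δ) volume := by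
      have h1 : IntegrableOn (fun z => Real.log |z - t₀|)
          (Set.Ioc (-1 + t₀) (1 + t₀)) volume := by
        have := myIntervalIntegrable_logabs t₀
        rwa [intervalIntegrable_iff_integrableOn_Ioc_of_le (by linarith)] at this
      have h2 : IntegrableOn (fun z => (n:ℝ) * abs (Real.log (abs (z - t₀))) + C)
          (Set.Ioc (-1 + t₀) (1 + t₀)) volume :=
        (h1.abs.const_mul (n:ℝ)).add ((integrableOn_const_iff).mpr (Or.inr measure_Ioc_lt_top))
      refine h2.mono_set fun z hz => ?_
      rw [Metric.mem_ball, Real.dist_eq] at hz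
      have h3 : |z - t₀| < 1 := lt_of_lt_of_le hz (min_le_right _ _)
      rw [abs_lt] at h3
      constructor <;> [linarith [h3.1]; linarith [h3.2]]
    refine hG.mono' hFmeas.aestronglyMeasurable.restrict ?_
    have hae1 : ∀ᵐ z ∂(volume.restrict (Metric.ball t₀ δ)), z ≠ t₀ :=
      ae_restrict_of_ae (by
        refine ae_iff.mpr ?_
        simpa using measure_singleton (μ := (volume : Measure ℝ)) t₀)
    filter_upwards [hae1, ae_restrict_mem measurableSet_ball] with z hz hzball
    have hmem : dist z t₀ < δ := by rwa [← Metric.mem_ball]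
    have hlt : dist z t₀ < ε := lt_of_lt_of_le hmem (min_le_left _ _)
    have hb := hball hlt hz
    rw [Real.norm_eq_abs, abs_abs]
    exact hb
  exact key.integrableOn_isCompact isCompact_Icc
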